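/- As the regularization weight tends to zero, the KL-regularized Gaussian optimum converges to the deterministic unregularized optimum: with H symmetric positive definite, b ∈ ℝᵐ, Σ̃ ≻ 0, the mean μ*(λ) = −(H + λΣ̃⁻¹)⁻¹(b − λΣ̃⁻¹μ̃) converges to −H⁻¹b and the covariance Σ*(λ) = ((1/λ)H + Σ̃⁻¹)⁻¹ converges to 0 as λ → 0⁺. -/

import Mathlib

open Matrix Filter Topology

lemma inv_contAt {m : ℕ} (A : Matrix (Fin m) (Fin m) ℝ) (hA : IsUnit A.det) :
    ContinuousAt Inv.inv A := by
  apply continuousAt_matrix_inv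
  rw [Ring.inverse_eq_inv']
  exact continuousAt_inv₀ (by simpa using hA.ne_zero)

lemma posDef_smul_pos {m : ℕ} {A : Matrix (Fin m) (Fin m) ℝ} (hA : A.PosDef)
    {c : ℝ} (hc : 0 < c) : (c • A).PosDef := by
  refine ⟨?_, fun x hx => ?_⟩
  · unfold Matrix.IsHermitian at *
    rw [Matrix.conjTranspose_smul, hA.1]
    simp
  · exact (hA.smul hc).2 hx

lemma tendsto_aux {m : ℕ}
    (H : Matrix (Fin m) (Fin m) ℝ) (hH : H.PosDef) (S : Matrix (Fin m) (Fin m) ℝ) :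
    Tendsto (fun l : ℝ => (H + l • S)⁻¹) (nhdsWithin 0 (Set.Ioi 0)) (nhds H⁻¹) := by
  have h1 : ContinuousAt (fun l : ℝ => H + l • S) 0 := by fun_prop
  have h2 : ContinuousAt Inv.inv (H + (0:ℝ) • S) := by
    simpa using inv_contAt H ((Matrix.isUnit_iff_isUnit_det _).1 hH.isUnit)
  have hc : ContinuousAt (Inv.inv ∘ fun l : ℝ => H + l • S) 0 := ContinuousAt.comp (f := fun l : ℝ => H + l • S) h2 h1
  simpa [Function.comp_def] using hc.continuousWithinAt.tendsto (s := Set.Ioi 0)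

/-- As the regularization weight `λ → 0⁺`, the KL-regularized Gaussian optimum converges to the
deterministic unregularized optimum: `μ*(λ) = −(H + λΣ̃⁻¹)⁻¹(b − λΣ̃⁻¹μ̃) → −H⁻¹b` and
`Σ*(λ) = ((1/λ)H + Σ̃⁻¹)⁻¹ → 0`. -/
theorem kl_optimum_tendsto_deterministic {m : ℕ}
    (H : Matrix (Fin m) (Fin m) ℝ) (hH : H.PosDef)
    (b μt : Fin m → ℝ) (St : Matrix (Fin m) (Fin m) ℝ) (hSt : St.PosDef) :
    Tendsto (fun l : ℝ => -(H + l • St⁻¹)⁻¹.mulVec (b - l • St⁻¹.mulVec μt))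
      (nhdsWithin 0 (Set.Ioi 0)) (nhds (-(H⁻¹.mulVec b))) ∧
    Tendsto (fun l : ℝ => ((1/l) • H + St⁻¹)⁻¹)
      (nhdsWithin 0 (Set.Ioi 0)) (nhds 0) := by
  have hinv := tendsto_aux H hH St⁻¹
  constructor
  · have hvec : Tendsto (fun l : ℝ => b - l • St⁻¹.mulVec μt)
        (nhdsWithin 0 (Set.Ioi 0)) (nhds b) := by
      have h : ContinuousAt (fun l : ℝ => b - l • St⁻¹.mulVec μt) 0 := by fun_prop
      simpa using h.continuousWithinAt.tendsto
    have hbil : Continuous (fun p : Matrix (Fin m) (Fin m) ℝ × (Fin m → ℝ) =>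
        p.1.mulVec p.2) := continuous_fst.matrix_mulVec continuous_snd
    have := (hbil.tendsto (H⁻¹, b)).comp (hinv.prodMk_nhds hvec)
    exact this.neg
  · have key : ∀ᶠ l in nhdsWithin (0:ℝ) (Set.Ioi 0),
        ((1/l) • H + St⁻¹)⁻¹ = l • (H + l • St⁻¹)⁻¹ := by
      filter_upwards [self_mem_nhdsWithin] with l hl
      have hl0 : (l:ℝ) ≠ 0 := ne_of_gt hl
      have heq : (1/l) • H + St⁻¹ = (1/l) • (H + l • St⁻¹) := by
        rw [smul_add, smul_smul]
        field_simp
        simp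
      have hpd : (H + l • St⁻¹).PosDef :=
        hH.add (posDef_smul_pos hSt.inv hl)
      have : Invertible (1/l : ℝ) := invertibleOfNonzero (by positivity)
      rw [heq, Matrix.inv_smul (A := H + l • St⁻¹) (1/l) ((Matrix.isUnit_iff_isUnit_det _).1 hpd.isUnit)]
      congr 1
      rw [invOf_eq_right_inv (by field_simp : (1/l:ℝ) * l = 1)]
    have hl0 : Tendsto (fun l : ℝ => l • (H + l • St⁻¹)⁻¹)
        (nhdsWithin 0 (Set.Ioi 0)) (nhds ((0:ℝ) • H⁻¹)) :=
      (tendsto_nhdsWithin_of_tendsto_nhds tendsto_id).smul hinv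
    rw [zero_smul] at hl0
    exact hl0.congr' (key.mono fun l h => h.symm)
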